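/- Let N be a semiprime natural number with prime factors p and q (p ≠ q). Let b be an integer and f = n₂X² + n₁X + n₀ ∈ ℤ[X] a digit polynomial of N to base b of degree 2 (so f(b) = N and n₂ ≠ 0). If gcd(n₂ · b, N) = 1 and gcd(N, n₂b² − n₀) = 1, then ν(f) = 2p + 2q − 8. -/

import Mathlib

/-- `x ∈ Z_N = {0, ..., N−1}` is suitable for `g ∈ ℤ[X]` if `1 < gcd(g(x), N) < N`;
`nu N g` counts the suitable elements. -/
def nu (N : ℕ) (g : Polynomial ℤ) : ℕ :=
  ((Finset.range N).filter
    (fun (x : ℕ) => 1 < Int.gcd (g.eval ((x : ℤ))) (N : ℤ) ∧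
      Int.gcd (g.eval ((x : ℤ))) (N : ℤ) < N)).card

open Finset

lemma quadRoots {p : ℕ} [Fact p.Prime] (n2 n1 n0 : ℤ) (β : ZMod p)
    (hα : (n2 : ZMod p) ≠ 0) (hβ : β ≠ 0)
    (hfb : (n2 : ZMod p) * β ^ 2 + (n1 : ZMod p) * β + (n0 : ZMod p) = 0)
    (hne : (n2 : ZMod p) * β ^ 2 - (n0 : ZMod p) ≠ 0) :
    (Finset.univ.filter (fun u : ZMod p =>
      (n2 : ZMod p) * u ^ 2 + (n1 : ZMod p) * u + (n0 : ZMod p) = 0)).card = 2 := by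
  set α : ZMod p := (n2 : ZMod p) with hαdef
  set ρ : ZMod p := (n0 : ZMod p) * (α * β)⁻¹ with hρdef
  have hαβ : α * β ≠ 0 := mul_ne_zero hα hβ
  have hfac : ∀ u : ZMod p, α * u^2 + (n1:ZMod p)*u + (n0:ZMod p) = α * ((u - β) * (u - ρ)) := by
    intro u
    have h1 : (n1 : ZMod p) * β = -(α * β^2) - (n0:ZMod p) := by linear_combination hfb
    have ha : α * α⁻¹ = 1 := mul_inv_cancel₀ hα
    have hb : β * β⁻¹ = 1 := mul_inv_cancel₀ hβ
    rw [hρdef]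
    linear_combination u*β⁻¹*hfb + (-(n1:ZMod p)*u - α*β*u - (n0:ZMod p))*hb + (β⁻¹*u*(n0:ZMod p) - (n0:ZMod p)*β*β⁻¹)*ha
  have hβρ : β ≠ ρ := by
    intro h
    apply hne
    rw [hρdef] at h
    field_simp at h
    linear_combination h
  have hset : Finset.univ.filter (fun u : ZMod p =>
      (n2 : ZMod p) * u ^ 2 + (n1 : ZMod p) * u + (n0 : ZMod p) = 0) = {β, ρ} := by
    ext u
    simp only [mem_filter, mem_univ, true_and, mem_insert, mem_singleton]
    rw [hfac u, mul_eq_zero, mul_eq_zero, sub_eq_zero, sub_eq_zero]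
    simp [hα]
  rw [hset, card_insert_of_notMem (by simpa using hβρ), card_singleton]


lemma count_range_mul (p q : ℕ) [NeZero p] [NeZero q] (hco : Nat.Coprime p q)
    (R : ZMod p → ZMod q → Prop) [∀ u v, Decidable (R u v)] :
    ((Finset.range (p*q)).filter (fun x : ℕ => R (x : ZMod p) (x : ZMod q))).card
    = (Finset.univ.filter (fun y : ZMod p × ZMod q => R y.1 y.2)).card := by
  have hinj : ∀ x ∈ Finset.range (p*q), ∀ y ∈ Finset.range (p*q),
      ((x : ZMod p), (x : ZMod q)) = ((y : ZMod p), (y : ZMod q)) → x = y := by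
    intro x hx y hy h
    rw [Prod.mk.injEq, ZMod.natCast_eq_natCast_iff, ZMod.natCast_eq_natCast_iff] at h
    have := (Nat.modEq_and_modEq_iff_modEq_mul hco).mp h
    simp only [mem_range] at hx hy
    have : x % (p*q) = y % (p*q) := this
    rwa [Nat.mod_eq_of_lt hx, Nat.mod_eq_of_lt hy] at this
  have hsurj : ∀ y : ZMod p × ZMod q, ∃ x ∈ Finset.range (p*q),
      ((x : ZMod p), (x : ZMod q)) = y := by
    have hcard : (Finset.univ : Finset (ZMod p × ZMod q)).card ≤ (Finset.range (p*q)).card := by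
      simp [Fintype.card_prod, ZMod.card]
    have := Finset.surj_on_of_inj_on_of_card_le
      (s := Finset.range (p*q)) (t := (Finset.univ : Finset (ZMod p × ZMod q)))
      (fun x _ => ((x : ZMod p), (x : ZMod q)))
      (fun x hx => Finset.mem_univ _)
      (fun x y hx hy h => hinj x hx y hy h) hcard
    intro y
    obtain ⟨x, hx, hxy⟩ := this y (Finset.mem_univ y)
    exact ⟨x, hx, hxy.symm⟩
  apply Finset.card_bij (fun (x : ℕ) (_ : x ∈ (Finset.range (p*q)).filter (fun x : ℕ => R (x : ZMod p) (x : ZMod q))) => ((x : ZMod p), (x : ZMod q)))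
  · intro x hx
    simp only [mem_filter, mem_range] at hx ⊢
    exact ⟨mem_univ _, hx.2⟩
  · intro x hx y hy h
    exact hinj x (Finset.mem_of_mem_filter _ hx) y (Finset.mem_of_mem_filter _ hy) h
  · intro y hy
    obtain ⟨x, hx, hxy⟩ := hsurj y
    refine ⟨x, ?_, hxy⟩
    simp only [mem_filter, mem_univ, true_and] at hy
    simp only [mem_filter, mem_range]
    refine ⟨by simpa using hx, ?_⟩
    rw [show (x : ZMod p) = y.1 from congrArg Prod.fst hxy,
        show (x : ZMod q) = y.2 from congrArg Prod.snd hxy]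
    exact hy


lemma gcd_between (p q : ℕ) (hp : p.Prime) (hq : q.Prime) (hpq : p ≠ q) (m : ℤ) :
    (1 < Int.gcd m ((p*q : ℕ) : ℤ) ∧ Int.gcd m ((p*q:ℕ):ℤ) < p*q) ↔
    (((p:ℤ) ∣ m ∧ ¬ (q:ℤ) ∣ m) ∨ ((q:ℤ) ∣ m ∧ ¬ (p:ℤ) ∣ m)) := by
  obtain ⟨d, hd⟩ : ∃ d, Int.gcd m ((p*q : ℕ) : ℤ) = d := ⟨_, rfl⟩
  rw [hd]
  have hdvd : d ∣ p * q := by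
    have : ((Int.gcd m ((p*q : ℕ) : ℤ)) : ℤ) ∣ ((p*q : ℕ) : ℤ) := Int.gcd_dvd_right _ _
    rw [hd] at this
    exact_mod_cast this
  have hdm : (d : ℤ) ∣ m := hd ▸ Int.gcd_dvd_left m ((p*q : ℕ) : ℤ)
  have hpd : (p:ℤ) ∣ m ↔ p ∣ d := by
    constructor
    · intro h
      have : ((p:ℕ):ℤ) ∣ (d : ℤ) := hd ▸ Int.dvd_coe_gcd h (by exact_mod_cast Dvd.intro q rfl)
      exact_mod_cast this
    · intro h
      exact dvd_trans (by exact_mod_cast h) hdm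
  have hqd : (q:ℤ) ∣ m ↔ q ∣ d := by
    constructor
    · intro h
      have : ((q:ℕ):ℤ) ∣ (d : ℤ) := hd ▸ Int.dvd_coe_gcd h (by exact_mod_cast Dvd.intro_left p rfl)
      exact_mod_cast this
    · intro h
      exact dvd_trans (by exact_mod_cast h) hdm
  have hcases : d = 1 ∨ d = p ∨ d = q ∨ d = p*q := by
    by_cases h : p ∣ d
    · obtain ⟨e, rfl⟩ := h
      have he : e ∣ q := (Nat.mul_dvd_mul_iff_left hp.pos).mp hdvd
      rcases (Nat.dvd_prime hq).mp he with rfl | rfl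
      · right; left; simp
      · right; right; right; rfl
    · have hcop : Nat.Coprime p d := hp.coprime_iff_not_dvd.mpr h
      have : d ∣ q := Nat.Coprime.dvd_of_dvd_mul_left hcop.symm hdvd
      rcases (Nat.dvd_prime hq).mp this with rfl | rfl
      · left; rfl
      · right; right; left; rfl
  have hqnp : ¬ q ∣ p := fun h => hpq ((Nat.prime_dvd_prime_iff_eq hq hp).mp h).symm
  have hpnq : ¬ p ∣ q := fun h => hpq ((Nat.prime_dvd_prime_iff_eq hp hq).mp h)
  rw [hpd, hqd]
  constructor
  · rintro ⟨h1, h2⟩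
    rcases hcases with hc | hc | hc | hc
    · omega
    · exact Or.inl ⟨hc ▸ dvd_refl d, fun h => hqnp (hc ▸ h)⟩
    · exact Or.inr ⟨hc ▸ dvd_refl d, fun h => hpnq (hc ▸ h)⟩
    · omega
  · rintro (⟨h1, h2⟩ | ⟨h1, h2⟩)
    · rcases hcases with hc | hc | hc | hc
      · exact absurd (hc ▸ h1) (by simpa using hp.one_lt.ne')
      · refine ⟨hc ▸ hp.one_lt, ?_⟩
        have := hp.one_lt; have := hq.one_lt
        nlinarith [hc]
      · exact absurd (hc ▸ h1) hpnq
      · exact absurd (hc ▸ Dvd.intro_left p rfl) h2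
    · rcases hcases with hc | hc | hc | hc
      · exact absurd (hc ▸ h1) (by simpa using hq.one_lt.ne')
      · exact absurd (hc ▸ h1) hqnp
      · refine ⟨hc ▸ hq.one_lt, ?_⟩
        have := hp.one_lt; have := hq.one_lt
        nlinarith [hc]
      · exact absurd (hc ▸ Dvd.intro q rfl) h2


lemma perPrime (r : ℕ) [Fact r.Prime] (N : ℕ) (b n2 n1 n0 : ℤ)
    (hr : (r:ℤ) ∣ ((N : ℕ):ℤ))
    (hdig : n2 * b ^ 2 + n1 * b + n0 = ((N : ℕ) : ℤ))
    (hcop : Int.gcd (n2 * b) ((N:ℕ) : ℤ) = 1)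
    (hcop2 : Int.gcd ((N:ℕ) : ℤ) (n2 * b ^ 2 - n0) = 1) :
    (Finset.univ.filter (fun u : ZMod r =>
      (n2 : ZMod r) * u ^ 2 + (n1 : ZMod r) * u + (n0 : ZMod r) = 0)).card = 2 := by
  have hprime : r.Prime := Fact.out
  have hunit1 : ¬ (r:ℤ) ∣ n2 * b := by
    intro hm
    have h2 : (r:ℤ) ∣ (Int.gcd (n2*b) ((N:ℕ):ℤ) : ℤ) := Int.dvd_coe_gcd hm hr
    rw [hcop] at h2
    have : r ∣ 1 := by exact_mod_cast h2
    exact hprime.one_lt.ne' (Nat.dvd_one.mp this)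
  have hα : (n2 : ZMod r) ≠ 0 := by
    intro h
    exact hunit1 (Dvd.dvd.mul_right ((ZMod.intCast_zmod_eq_zero_iff_dvd n2 r).mp h) b)
  have hβ : (b : ZMod r) ≠ 0 := by
    intro h
    exact hunit1 (Dvd.dvd.mul_left ((ZMod.intCast_zmod_eq_zero_iff_dvd b r).mp h) n2)
  have hN0 : (((N:ℕ):ℤ) : ZMod r) = 0 := (ZMod.intCast_zmod_eq_zero_iff_dvd _ r).mpr hr
  have hfb : (n2 : ZMod r) * (b : ZMod r) ^ 2 + (n1 : ZMod r) * (b : ZMod r)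
      + (n0 : ZMod r) = 0 := by
    have := congrArg (Int.cast : ℤ → ZMod r) hdig
    push_cast at this
    rw [this]
    exact_mod_cast hN0
  have hne : (n2 : ZMod r) * (b : ZMod r) ^ 2 - (n0 : ZMod r) ≠ 0 := by
    intro h
    have hm : (r:ℤ) ∣ (n2 * b ^ 2 - n0) := by
      rw [← ZMod.intCast_zmod_eq_zero_iff_dvd]
      push_cast
      exact h
    have h2 : (r:ℤ) ∣ (Int.gcd ((N:ℕ):ℤ) (n2 * b ^ 2 - n0) : ℤ) := Int.dvd_coe_gcd hr hm
    rw [hcop2] at h2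
    have : r ∣ 1 := by exact_mod_cast h2
    exact hprime.one_lt.ne' (Nat.dvd_one.mp this)
  exact quadRoots n2 n1 n0 (b : ZMod r) hα hβ hfb hne


/-- Let `N = p * q` be semiprime with distinct primes `p, q`, and
`f = n₂X² + n₁X + n₀ ∈ ℤ[X]` a digit polynomial of `N` to base `b` of degree 2
(so `f(b) = N`, `n₂ ≠ 0`). If `gcd(n₂·b, N) = 1` and `gcd(N, n₂b² − n₀) = 1`,
then `ν(f) = 2p + 2q − 8`. -/
theorem nu_quadratic_digit_poly (N p q : ℕ) (hp : p.Prime) (hq : q.Prime)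
    (hpq : p ≠ q) (hN : N = p * q) (b n2 n1 n0 : ℤ)
    (hn2 : n2 ≠ 0)
    (hdig : n2 * b ^ 2 + n1 * b + n0 = (N : ℤ))
    (hcop : Int.gcd (n2 * b) (N : ℤ) = 1)
    (hcop2 : Int.gcd (N : ℤ) (n2 * b ^ 2 - n0) = 1) :
    (nu N (Polynomial.C n2 * Polynomial.X ^ 2 + Polynomial.C n1 * Polynomial.X +
        Polynomial.C n0) : ℤ) = 2 * p + 2 * q - 8 := by
  haveI : Fact p.Prime := ⟨hp⟩
  haveI : Fact q.Prime := ⟨hq⟩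
  subst hN
  have hco : Nat.Coprime p q := (Nat.coprime_primes hp hq).mpr hpq
  have hpdvd : (p:ℤ) ∣ ((p*q : ℕ):ℤ) := by exact_mod_cast Int.natCast_dvd_natCast.mpr ⟨q, rfl⟩
  have hqdvd : (q:ℤ) ∣ ((p*q : ℕ):ℤ) := by exact_mod_cast Int.natCast_dvd_natCast.mpr ⟨p, mul_comm p q⟩
  have cardP := perPrime p (p*q) b n2 n1 n0 hpdvd hdig hcop hcop2
  have cardQ := perPrime q (p*q) b n2 n1 n0 hqdvd hdig hcop hcop2
  unfold nu
  rw [Finset.filter_congr (fun x (hx : x ∈ Finset.range (p*q)) => ?_)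
      (q := fun x : ℕ =>
        ((n2 : ZMod p) * (x:ZMod p) ^ 2 + (n1 : ZMod p) * (x:ZMod p) + (n0 : ZMod p) = 0 ∧
         ¬ ((n2 : ZMod q) * (x:ZMod q) ^ 2 + (n1 : ZMod q) * (x:ZMod q) + (n0 : ZMod q) = 0)) ∨
        ((n2 : ZMod q) * (x:ZMod q) ^ 2 + (n1 : ZMod q) * (x:ZMod q) + (n0 : ZMod q) = 0 ∧
         ¬ ((n2 : ZMod p) * (x:ZMod p) ^ 2 + (n1 : ZMod p) * (x:ZMod p) + (n0 : ZMod p) = 0)))]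
  · rw [count_range_mul p q hco (fun u v =>
      ((n2 : ZMod p) * u ^ 2 + (n1 : ZMod p) * u + (n0 : ZMod p) = 0 ∧
       ¬ ((n2 : ZMod q) * v ^ 2 + (n1 : ZMod q) * v + (n0 : ZMod q) = 0)) ∨
      ((n2 : ZMod q) * v ^ 2 + (n1 : ZMod q) * v + (n0 : ZMod q) = 0 ∧
       ¬ ((n2 : ZMod p) * u ^ 2 + (n1 : ZMod p) * u + (n0 : ZMod p) = 0)))]
    have hsplit : (Finset.univ.filter (fun y : ZMod p × ZMod q =>
        ((n2 : ZMod p) * y.1 ^ 2 + (n1 : ZMod p) * y.1 + (n0 : ZMod p) = 0 ∧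
         ¬ ((n2 : ZMod q) * y.2 ^ 2 + (n1 : ZMod q) * y.2 + (n0 : ZMod q) = 0)) ∨
        ((n2 : ZMod q) * y.2 ^ 2 + (n1 : ZMod q) * y.2 + (n0 : ZMod q) = 0 ∧
         ¬ ((n2 : ZMod p) * y.1 ^ 2 + (n1 : ZMod p) * y.1 + (n0 : ZMod p) = 0))))
        = ((Finset.univ.filter (fun u : ZMod p =>
              (n2 : ZMod p) * u ^ 2 + (n1 : ZMod p) * u + (n0 : ZMod p) = 0)) ×ˢ
           (Finset.univ.filter (fun v : ZMod q =>
              ¬ ((n2 : ZMod q) * v ^ 2 + (n1 : ZMod q) * v + (n0 : ZMod q) = 0))))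
          ∪ ((Finset.univ.filter (fun u : ZMod p =>
              ¬ ((n2 : ZMod p) * u ^ 2 + (n1 : ZMod p) * u + (n0 : ZMod p) = 0))) ×ˢ
             (Finset.univ.filter (fun v : ZMod q =>
              (n2 : ZMod q) * v ^ 2 + (n1 : ZMod q) * v + (n0 : ZMod q) = 0))) := by
      ext ⟨u, v⟩
      simp only [mem_filter, mem_univ, true_and, mem_union, mem_product]
      tauto
    rw [hsplit, Finset.card_union_of_disjoint, Finset.card_product, Finset.card_product]
    · have cardPc : (Finset.univ.filter (fun u : ZMod p =>
          ¬ ((n2 : ZMod p) * u ^ 2 + (n1 : ZMod p) * u + (n0 : ZMod p) = 0))).card = p - 2 := by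
        have := Finset.card_filter_add_card_filter_not
          (s := (Finset.univ : Finset (ZMod p)))
          (p := fun u : ZMod p => (n2 : ZMod p) * u ^ 2 + (n1 : ZMod p) * u + (n0 : ZMod p) = 0)
        rw [cardP] at this
        have hcard : (Finset.univ : Finset (ZMod p)).card = p := by simp [ZMod.card]
        omega
      have cardQc : (Finset.univ.filter (fun v : ZMod q =>
          ¬ ((n2 : ZMod q) * v ^ 2 + (n1 : ZMod q) * v + (n0 : ZMod q) = 0))).card = q - 2 := by
        have := Finset.card_filter_add_card_filter_not
          (s := (Finset.univ : Finset (ZMod q)))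
          (p := fun v : ZMod q => (n2 : ZMod q) * v ^ 2 + (n1 : ZMod q) * v + (n0 : ZMod q) = 0)
        rw [cardQ] at this
        have hcard : (Finset.univ : Finset (ZMod q)).card = q := by simp [ZMod.card]
        omega
      rw [cardP, cardQ, cardPc, cardQc]
      have h2p := hp.two_le
      have h2q := hq.two_le
      push_cast [Nat.cast_sub h2p, Nat.cast_sub h2q]
      ring
    · rw [Finset.disjoint_left]
      rintro ⟨u, v⟩ h1 h2
      simp only [Finset.mem_product, mem_filter, mem_univ, true_and] at h1 h2
      tauto
  · -- pointwise equivalence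
    have heval : (Polynomial.C n2 * Polynomial.X ^ 2 + Polynomial.C n1 * Polynomial.X +
        Polynomial.C n0 : Polynomial ℤ).eval ((x:ℕ):ℤ) = n2 * ((x:ℕ):ℤ)^2 + n1 * ((x:ℕ):ℤ) + n0 := by
      simp
    rw [heval]
    rw [gcd_between p q hp hq hpq]
    have hep : ((p:ℤ) ∣ (n2 * ((x:ℕ):ℤ)^2 + n1 * ((x:ℕ):ℤ) + n0)) ↔
        ((n2 : ZMod p) * (x:ZMod p) ^ 2 + (n1 : ZMod p) * (x:ZMod p) + (n0 : ZMod p) = 0) := by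
      rw [← ZMod.intCast_zmod_eq_zero_iff_dvd]
      push_cast
      rfl
    have heq : ((q:ℤ) ∣ (n2 * ((x:ℕ):ℤ)^2 + n1 * ((x:ℕ):ℤ) + n0)) ↔
        ((n2 : ZMod q) * (x:ZMod q) ^ 2 + (n1 : ZMod q) * (x:ZMod q) + (n0 : ZMod q) = 0) := by
      rw [← ZMod.intCast_zmod_eq_zero_iff_dvd]
      push_cast
      rfl
    rw [hep, heq]
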